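/- Let a ∈ ℂ[X] have degree at most 4 and satisfy λ⁴·conj(a(1/conj(λ))) = a(λ) for all λ ≠ 0, with a(−1) a positive real number, and let â ∈ ℂ[X] satisfy â(κ) = ((i + κ)⁴ / a(−1)) · a((i − κ)/(i + κ)) for all κ ≠ −i. Then for all λ, ν ∈ ℂ with λ ≠ −1 and ν² = λ·a(λ), setting κ = (λ − 1)/(i(λ + 1)) and ν̂ = i·(i + κ)³·ν / √(a(−1)), one has ν̂² = (κ² + 1)·â(κ). -/

import Mathlib

open Polynomial

/-- The Cayley transform carries the spectral curve `ν² = λ·a(λ)` onto the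
curve `ν̂² = (κ² + 1)·â(κ)`: with `κ = (λ−1)/(i(λ+1))` and
`ν̂ = i(i+κ)³ν/√(a(−1))`, one has `ν̂² = (κ²+1)·â(κ)`. -/
theorem stmt_17 (a ahat : ℂ[X]) (hdeg : a.degree ≤ 4)
    (hreal : ∀ l : ℂ, l ≠ 0 →
      l ^ 4 * (starRingEnd ℂ) (a.eval ((starRingEnd ℂ) l)⁻¹) = a.eval l)
    (r : ℝ) (hr : 0 < r) (har : a.eval (-1) = (r : ℂ))
    (hahat : ∀ κ : ℂ, κ ≠ -Complex.I →
      ahat.eval κ = ((Complex.I + κ) ^ 4 / a.eval (-1)) *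
        a.eval ((Complex.I - κ) / (Complex.I + κ))) :
    ∀ l ν : ℂ, l ≠ -1 → ν ^ 2 = l * a.eval l →
      ∀ κ νhat : ℂ, κ = (l - 1) / (Complex.I * (l + 1)) →
        νhat = Complex.I * (Complex.I + κ) ^ 3 * ν / (Real.sqrt r : ℂ) →
        νhat ^ 2 = (κ ^ 2 + 1) * ahat.eval κ := by
  intro l ν hl hν κ νhat hκ hνh
  have hl1 : l + 1 ≠ 0 := fun h => hl (by linear_combination h)
  have hI : (Complex.I : ℂ) ≠ 0 := Complex.I_ne_zero
  have hden : Complex.I * (l + 1) ≠ 0 := mul_ne_zero hI hl1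
  have hiκ : Complex.I + κ = -2 / (Complex.I * (l + 1)) := by
    rw [hκ, eq_div_iff hden, add_mul, div_mul_cancel₀ _ hden]
    linear_combination (l + 1) * Complex.I_sq
  have hiκ2 : Complex.I - κ = -2 * l / (Complex.I * (l + 1)) := by
    rw [hκ, eq_div_iff hden, sub_mul, div_mul_cancel₀ _ hden]
    linear_combination (l + 1) * Complex.I_sq
  have hiκ0 : Complex.I + κ ≠ 0 := by
    rw [hiκ]; exact div_ne_zero (by norm_num) hden
  have hκI : κ ≠ -Complex.I := by
    intro h; apply hiκ0; rw [h]; ring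
  have hmap : (Complex.I - κ) / (Complex.I + κ) = l := by
    rw [hiκ, hiκ2]; field_simp
  have hah := hahat κ hκI
  rw [hmap, har] at hah
  have hr0 : (r : ℂ) ≠ 0 := by exact_mod_cast hr.ne'
  have hsq : ((Real.sqrt r : ℝ) : ℂ) ^ 2 = (r : ℂ) := by
    norm_cast; exact Real.sq_sqrt hr.le
  have hsr0 : ((Real.sqrt r : ℝ) : ℂ) ≠ 0 := by
    intro h; apply hr0; rw [← hsq, h]; ring
  have hkey : κ - Complex.I = -l * (Complex.I + κ) := by
    rw [hiκ]; linear_combination -hiκ2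
  have hfac : κ ^ 2 + 1 = (κ + Complex.I) * (κ - Complex.I) := by
    linear_combination Complex.I_sq
  have h1 : νhat ^ 2 = -((Complex.I + κ) ^ 6 * (l * a.eval l)) / r := by
    rw [hνh, div_pow, hsq, mul_pow, mul_pow, Complex.I_sq, ← hν]; ring
  rw [h1, hah, hfac, hkey]
  field_simp
  ring
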